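/- If u is a nonzero real polynomial, a < b are real numbers, and ∫_a^b u(x) Q(x) dx = 0 for every real polynomial Q of degree at most q, then u has at least q+1 distinct roots in the open interval (a, b). -/

import Mathlib

open MeasureTheory

open Polynomial in
/-- A nonzero polynomial with no roots in `(a,b)` or only even-multiplicity roots there
has constant sign on `(a,b)`. -/
lemma sign_const_aux (a b : ℝ) :
    ∀ n (p : ℝ[X]), p.natDegree ≤ n → p ≠ 0 →
      (∀ r ∈ Set.Ioo a b, p.IsRoot r → Even (p.rootMultiplicity r)) →
      (∀ x ∈ Set.Ioo a b, 0 ≤ p.eval x) ∨ (∀ x ∈ Set.Ioo a b, p.eval x ≤ 0) := by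
  have noroot : ∀ p : ℝ[X], (∀ r ∈ Set.Ioo a b, ¬ p.IsRoot r) →
      (∀ x ∈ Set.Ioo a b, 0 ≤ p.eval x) ∨ (∀ x ∈ Set.Ioo a b, p.eval x ≤ 0) := by
    intro p hnr
    by_contra hc
    push_neg at hc
    obtain ⟨⟨x₁, hx₁, hfx₁⟩, ⟨x₂, hx₂, hfx₂⟩⟩ := hc
    have hcont : ContinuousOn (fun x => p.eval x) (Set.uIcc x₁ x₂) :=
      (Polynomial.continuous p).continuousOn
    have h0 : (0 : ℝ) ∈ Set.uIcc (p.eval x₁) (p.eval x₂) := by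
      rw [Set.mem_uIcc]
      left; exact ⟨hfx₁.le, hfx₂.le⟩
    obtain ⟨c, hc, hc0⟩ := intermediate_value_uIcc hcont h0
    have hcmem : c ∈ Set.Ioo a b := by
      have : Set.uIcc x₁ x₂ ⊆ Set.Ioo a b := Set.ordConnected_Ioo.uIcc_subset hx₁ hx₂
      exact this hc
    exact hnr c hcmem hc0
  intro n
  induction n with
  | zero =>
    intro p hdeg hp _
    apply noroot
    intro r _ hr
    have := Polynomial.natDegree_eq_zero.mp (Nat.le_zero.mp hdeg)
    obtain ⟨c, rfl⟩ := this
    simp only [Polynomial.IsRoot, Polynomial.eval_C] at hr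
    exact hp (by simp [hr])
  | succ n ih =>
    intro p hdeg hp hev
    by_cases hroot : ∃ r ∈ Set.Ioo a b, p.IsRoot r
    · obtain ⟨r, hrmem, hr⟩ := hroot
      set m := p.rootMultiplicity r with hm
      have hmev : Even m := hev r hrmem hr
      have hmpos : 0 < m := (Polynomial.rootMultiplicity_pos hp).mpr hr
      have hm2 : 2 ≤ m := by
        rcases hmev with ⟨k, hk⟩; omega
      obtain ⟨g, hpg, hgnd⟩ := p.exists_eq_pow_rootMultiplicity_mul_and_not_dvd hp r
      have hg0 : g ≠ 0 := by
        rintro rfl; rw [mul_zero] at hpg; exact hp hpg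
      have hXr : ((Polynomial.X - Polynomial.C r : ℝ[X]) ^ m) ≠ 0 :=
        pow_ne_zero _ (Polynomial.X_sub_C_ne_zero r)
      have hdegg : g.natDegree ≤ n := by
        have : p.natDegree = m + g.natDegree := by
          rw [hpg, Polynomial.natDegree_mul hXr hg0, Polynomial.natDegree_pow,
            Polynomial.natDegree_X_sub_C, mul_one]
        omega
      have hgr : ¬ g.IsRoot r := fun h => hgnd (Polynomial.dvd_iff_isRoot.mpr h)
      have hgev : ∀ s ∈ Set.Ioo a b, g.IsRoot s → Even (g.rootMultiplicity s) := by
        intro s hsmem hs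
        have hsr : s ≠ r := by rintro rfl; exact hgr hs
        have hps : p.IsRoot s := by
          rw [hpg]; simp [Polynomial.IsRoot, hs.eq_zero]
        have hmult : p.rootMultiplicity s = g.rootMultiplicity s := by
          rw [hpg, Polynomial.rootMultiplicity_mul (hpg ▸ hp),
            Polynomial.rootMultiplicity_eq_zero, zero_add]
          simp only [Polynomial.IsRoot, Polynomial.eval_pow, Polynomial.eval_sub,
            Polynomial.eval_X, Polynomial.eval_C]
          exact pow_ne_zero _ (sub_ne_zero.mpr hsr)
        rw [← hmult]
        exact hev s hsmem hps
      have hfac : ∀ x : ℝ, p.eval x = (x - r) ^ m * g.eval x := by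
        intro x; rw [hpg]; simp [hm]
      have hpow : ∀ x : ℝ, 0 ≤ (x - r) ^ m := fun x => hmev.pow_nonneg _
      rcases ih g hdegg hg0 hgev with h | h
      · left; intro x hx
        rw [hfac]; exact mul_nonneg (hpow x) (h x hx)
      · right; intro x hx
        rw [hfac]; exact mul_nonpos_of_nonneg_of_nonpos (hpow x) (h x hx)
    · push_neg at hroot
      exact noroot p hroot

open Polynomial in
/-- A nonzero polynomial that is nonnegative on `(a,b)` has positive integral. -/
lemma integral_pos_of_nonneg (p : ℝ[X]) (hp : p ≠ 0) (a b : ℝ) (hab : a < b)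
    (hnn : ∀ x ∈ Set.Ioo a b, 0 ≤ p.eval x) :
    0 < ∫ x in a..b, p.eval x := by
  have hfi : IntervalIntegrable (fun x => p.eval x) volume a b :=
    (Polynomial.continuous p).intervalIntegrable a b
  have h₀ : 0 ≤ᵐ[volume.restrict (Set.uIoc a b)] fun x => p.eval x := by
    rw [Filter.EventuallyLE, Set.uIoc_of_le hab.le]
    refine ae_restrict_of_ae_eq_of_ae_restrict Ioo_ae_eq_Ioc ?_
    rw [ae_restrict_iff' measurableSet_Ioo]
    filter_upwards with x hx using hnn x hx
  rw [intervalIntegral.integral_pos_iff_support_of_nonneg_ae' h₀ hfi]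
  refine ⟨hab, ?_⟩
  have hZ : volume {x : ℝ | p.IsRoot x} = 0 :=
    (Polynomial.finite_setOf_isRoot hp).measure_zero _
  by_contra hm
  push_neg at hm
  have hsub : Set.Ioc a b ⊆
      (Function.support (fun x => p.eval x) ∩ Set.Ioc a b) ∪ {x : ℝ | p.IsRoot x} := by
    intro x hx
    by_cases h : p.eval x = 0
    · exact Or.inr h
    · exact Or.inl ⟨h, hx⟩
  have : volume (Set.Ioc a b) = 0 := by
    refine le_antisymm ?_ zero_le
    calc volume (Set.Ioc a b)
        ≤ volume ((Function.support (fun x => p.eval x) ∩ Set.Ioc a b)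
            ∪ {x : ℝ | p.IsRoot x}) := measure_mono hsub
      _ ≤ volume (Function.support (fun x => p.eval x) ∩ Set.Ioc a b)
            + volume {x : ℝ | p.IsRoot x} := measure_union_le _ _
      _ = 0 := by rw [hZ, nonpos_iff_eq_zero.mp hm, add_zero]
  rw [Real.volume_Ioc] at this
  simp only [ENNReal.ofReal_eq_zero, sub_nonpos] at this
  exact absurd this (not_le.mpr hab)

open Polynomial in
/-- A nonzero polynomial of constant sign on `(a,b)` has nonzero integral. -/
lemma integral_ne_zero_of_sign (p : ℝ[X]) (hp : p ≠ 0) (a b : ℝ) (hab : a < b)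
    (h : (∀ x ∈ Set.Ioo a b, 0 ≤ p.eval x) ∨ (∀ x ∈ Set.Ioo a b, p.eval x ≤ 0)) :
    (∫ x in a..b, p.eval x) ≠ 0 := by
  rcases h with h | h
  · exact (integral_pos_of_nonneg p hp a b hab h).ne'
  · have hneg : 0 < ∫ x in a..b, (-p).eval x :=
      integral_pos_of_nonneg (-p) (neg_ne_zero.mpr hp) a b hab
        (fun x hx => by simpa using neg_nonneg.mpr (h x hx))
    intro h0
    simp only [Polynomial.eval_neg, intervalIntegral.integral_neg, h0, neg_zero,
      lt_self_iff_false] at hneg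

/-- If `u` is a nonzero real polynomial, `a < b`, and `∫_a^b u Q = 0` for every
real polynomial `Q` of degree at most `q`, then `u` has at least `q + 1`
distinct roots in the open interval `(a, b)`. -/
theorem roots_from_orthogonality
    (u : Polynomial ℝ) (hu : u ≠ 0) (a b : ℝ) (hab : a < b) (q : ℕ)
    (hortho : ∀ Q : Polynomial ℝ, Q.natDegree ≤ q →
      ∫ x in a..b, Polynomial.eval x u * Polynomial.eval x Q = 0) :
    ∃ S : Finset ℝ, q + 1 ≤ S.card ∧
      ∀ x ∈ S, x ∈ Set.Ioo a b ∧ Polynomial.eval x u = 0 := by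
  classical
  set S : Finset ℝ := u.roots.toFinset.filter (fun r => r ∈ Set.Ioo a b) with hS
  refine ⟨S, ?_, ?_⟩
  · by_contra hlt
    push_neg at hlt
    have hcard : S.card ≤ q := by omega
    -- construct Q
    set e : ℝ → ℕ := fun r => u.rootMultiplicity r % 2 with he
    set Q : Polynomial ℝ :=
      ∏ r ∈ S, (Polynomial.X - Polynomial.C r) ^ (e r) with hQ
    have hQmonic : Q.Monic := Polynomial.monic_prod_of_monic _ _
      (fun r _ => (Polynomial.monic_X_sub_C r).pow _)
    have hQ0 : Q ≠ 0 := hQmonic.ne_zero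
    have hQdeg : Q.natDegree ≤ q := by
      have : Q.natDegree = ∑ r ∈ S, ((Polynomial.X - Polynomial.C r) ^ (e r)).natDegree :=
        Polynomial.natDegree_prod _ _
          (fun r _ => pow_ne_zero _ (Polynomial.X_sub_C_ne_zero r))
      rw [this]
      calc ∑ r ∈ S, ((Polynomial.X - Polynomial.C r) ^ (e r)).natDegree
          ≤ ∑ _r ∈ S, 1 := by
            refine Finset.sum_le_sum fun r _ => ?_
            rw [Polynomial.natDegree_pow, Polynomial.natDegree_X_sub_C, mul_one]
            exact Nat.le_of_lt_succ (Nat.mod_lt _ (by norm_num))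
        _ = S.card := by simp
        _ ≤ q := hcard
    set p : Polynomial ℝ := u * Q with hp
    have hp0 : p ≠ 0 := mul_ne_zero hu hQ0
    have hSroot : ∀ r ∈ S, u.IsRoot r ∧ r ∈ Set.Ioo a b := by
      intro r hr
      rw [hS, Finset.mem_filter, Multiset.mem_toFinset, Polynomial.mem_roots hu] at hr
      exact ⟨hr.1, hr.2⟩
    -- all roots of p in (a,b) have even multiplicity
    have hev : ∀ r ∈ Set.Ioo a b, p.IsRoot r → Even (p.rootMultiplicity r) := by
      intro r hrmem hr
      have hur : u.IsRoot r := by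
        by_contra hur
        have hQr : ¬ Q.IsRoot r := by
          simp only [hQ, Polynomial.IsRoot, Polynomial.eval_prod, Polynomial.eval_pow,
            Polynomial.eval_sub, Polynomial.eval_X, Polynomial.eval_C,
            Finset.prod_eq_zero_iff, not_exists]
          rintro s ⟨hs, hrs⟩
          have hrs0 : r = s := by
            have := (pow_eq_zero_iff'.mp hrs).1
            linarith [sub_eq_zero.mp this]
          exact hur (hrs0 ▸ (hSroot s hs).1)
        have : p.eval r ≠ 0 := by
          rw [hp, Polynomial.eval_mul]
          exact mul_ne_zero hur hQr
        exact this hr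
      have hrS : r ∈ S := by
        rw [hS, Finset.mem_filter, Multiset.mem_toFinset, Polynomial.mem_roots hu]
        exact ⟨hur, hrmem⟩
      -- multiplicity of Q at r equals e r
      have hQmult : Q.rootMultiplicity r = e r := by
        have hfac : Q = (Polynomial.X - Polynomial.C r) ^ (e r) *
            ∏ s ∈ S.erase r, (Polynomial.X - Polynomial.C s) ^ (e s) := by
          rw [hQ, ← Finset.mul_prod_erase _ _ hrS]
        have hrest0 : (∏ s ∈ S.erase r, (Polynomial.X - Polynomial.C s) ^ (e s)) ≠ 0 :=
          Finset.prod_ne_zero_iff.mpr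
            (fun s _ => pow_ne_zero _ (Polynomial.X_sub_C_ne_zero s))
        have hrestroot : ¬ (∏ s ∈ S.erase r,
            (Polynomial.X - Polynomial.C s) ^ (e s)).IsRoot r := by
          simp only [Polynomial.IsRoot, Polynomial.eval_prod, Polynomial.eval_pow,
            Polynomial.eval_sub, Polynomial.eval_X, Polynomial.eval_C,
            Finset.prod_eq_zero_iff, not_exists]
          rintro s ⟨hs, hrs⟩
          have hrs0 : r = s := by
            have := (pow_eq_zero_iff'.mp hrs).1
            linarith [sub_eq_zero.mp this]
          exact (Finset.mem_erase.mp hs).1 hrs0.symm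
        rw [hfac, Polynomial.rootMultiplicity_mul
            (by rw [← hfac]; exact hQ0),
          Polynomial.rootMultiplicity_X_sub_C_pow,
          Polynomial.rootMultiplicity_eq_zero hrestroot, add_zero]
      have hmul : p.rootMultiplicity r = u.rootMultiplicity r + Q.rootMultiplicity r :=
        Polynomial.rootMultiplicity_mul hp0
      rw [hmul, hQmult]
      simp only [he, Nat.even_iff]
      omega
    have hsign := sign_const_aux a b p.natDegree p le_rfl hp0 hev
    have hint : (∫ x in a..b, p.eval x) ≠ 0 :=
      integral_ne_zero_of_sign p hp0 a b hab hsign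
    apply hint
    have := hortho Q hQdeg
    simpa only [hp, Polynomial.eval_mul] using this
  · intro x hx
    rw [hS, Finset.mem_filter, Multiset.mem_toFinset, Polynomial.mem_roots hu] at hx
    exact ⟨hx.2, hx.1⟩
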